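/- Let (Y,ρ) be the compact metric space built from a fixed n-point metric space (X,d) of diameter 1 and minimal distance δ, with Ψ·δ > 1 and ρ defined on X^ℕ via first-disagreement coordinates scaled by n^{−(k−1)/α}, α = log_Ψ n. Let P be a hereditary, dilation-invariant metric property, and suppose the largest subset of X having property P has cardinality m ∈ {1,…,n−1}. Then every subset Z ⊆ Y having property P satisfies dim_H(Z,ρ) ≤ log_Ψ m. -/

import Mathlib

open scoped Classical
open MeasureTheory
open scoped ENNReal

universe u

/-- The self-similar distance on `X^ℕ`: for `x ≠ y`, with `m` the first differing
coordinate (the paper's `k = m+1`), `ρ(x,y) = d(x_m, y_m) / n^(m/α)`. -/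
noncomputable def selfSimDist {X : Type u} [MetricSpace X] (n : ℕ) (α : ℝ)
    (x y : ℕ → X) : ℝ :=
  if h : x = y then 0
  else
    dist (x (Nat.find (Function.ne_iff.mp h))) (y (Nat.find (Function.ne_iff.mp h))) /
      (n : ℝ) ^ ((Nat.find (Function.ne_iff.mp h) : ℝ) / α)

/-- Let `(Y,ρ)` be the self-similar space built from a fixed `n`-point
metric space `(X,d)` of diameter `1` and minimal distance `δ` with `Ψ·δ > 1`, and let `P`
be a hereditary, dilation-invariant metric property whose largest subset of `X` has
cardinality `m ∈ {1,…,n−1}`. Then every `Z ⊆ Y` with property `P` satisfies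
`dim_H(Z,ρ) ≤ log_Ψ m`. -/
theorem stmt16 {X : Type u} [Fintype X] [MetricSpace X]
    {Y : Type u} [MetricSpace Y] [MeasurableSpace Y] [BorelSpace Y]
    (n : ℕ) (hn : n = Fintype.card X) (hn2 : 2 ≤ n)
    (hdiam : Metric.diam (Set.univ : Set X) = 1)
    (δ : ℝ) (hδpos : 0 < δ)
    (hδ_min : ∀ x y : X, x ≠ y → δ ≤ dist x y)
    (hδ_att : ∃ x y : X, x ≠ y ∧ dist x y = δ)
    (Ψ : ℝ) (hΨ : 1 / δ < Ψ)
    (α : ℝ) (hα : α = Real.log n / Real.log Ψ)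
    (e : Y ≃ (ℕ → X))
    (hdist : ∀ a b : Y, dist a b = selfSimDist n α (e a) (e b))
    (P : (Z : Type u) → (Z → Z → ℝ) → Prop)
    (hP_iso : ∀ (Z W : Type u) (dZ : Z → Z → ℝ) (dW : W → W → ℝ) (f : Z ≃ W),
      (∀ a b, dW (f a) (f b) = dZ a b) → P Z dZ → P W dW)
    (hP_her : ∀ (Z : Type u) (dZ : Z → Z → ℝ) (S : Set Z), P Z dZ →
      P S (fun a b => dZ a b))
    (hP_dil : ∀ (Z : Type u) (dZ : Z → Z → ℝ) (lam : ℝ), 0 < lam → P Z dZ →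
      P Z (fun a b => lam * dZ a b))
    (m : ℕ) (hm1 : 1 ≤ m) (hmn : m ≤ n - 1)
    (hmax : ∀ S : Set X, P S (fun a b => dist (a : X) b) → S.ncard ≤ m)
    (hatt : ∃ S : Set X, P S (fun a b => dist (a : X) b) ∧ S.ncard = m) :
    ∀ Z : Set Y, P Z (fun a b => dist (a : Y) b) →
      dimH Z ≤ ENNReal.ofReal (Real.log m / Real.log Ψ) := by
  intro Z hZ
  -- basic positivity facts
  have hδ1 : δ ≤ 1 := by
    obtain ⟨x, y, hxy, hd⟩ := hδ_att
    rw [← hd, ← hdiam]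
    exact Metric.dist_le_diam_of_mem (Set.finite_univ.isBounded) (Set.mem_univ x)
      (Set.mem_univ y)
  have hΨ1 : 1 < Ψ := lt_of_le_of_lt (one_le_one_div hδpos hδ1) hΨ
  have hΨ0 : 0 < Ψ := lt_trans one_pos hΨ1
  have hlogΨ : 0 < Real.log Ψ := Real.log_pos hΨ1
  have hn1 : (1 : ℝ) < (n : ℝ) := by exact_mod_cast lt_of_lt_of_le one_lt_two hn2
  have hlogn : 0 < Real.log n := Real.log_pos hn1
  -- the scaling factor is Ψ^k
  have hpow : ∀ k : ℕ, (n : ℝ) ^ ((k : ℝ) / α) = Ψ ^ k := by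
    intro k
    rw [Real.rpow_def_of_pos (lt_trans one_pos hn1), hα]
    have h1 : Real.log n * ((k : ℝ) / (Real.log n / Real.log Ψ)) = (k : ℝ) * Real.log Ψ := by
      field_simp
    rw [h1, mul_comm, Real.exp_mul, Real.exp_log hΨ0, Real.rpow_natCast]
  -- the distance formula in terms of first disagreement
  have hkey : ∀ a b : Y, ∀ k : ℕ, (∀ i, i < k → e a i = e b i) → e a k ≠ e b k →
      dist a b = dist (e a k) (e b k) / Ψ ^ k := by
    intro a b k hlt hk
    have hne : e a ≠ e b := fun h => hk (by rw [h])
    rw [hdist a b, selfSimDist, dif_neg hne]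
    have hfind : Nat.find (Function.ne_iff.mp hne) = k := by
      rw [Nat.find_eq_iff]
      exact ⟨hk, fun j hj => not_not_intro (hlt j hj)⟩
    rw [hfind, hpow k]
  -- diameter bound for common prefixes
  have hub : ∀ a b : Y, ∀ k : ℕ, (∀ i, i < k → e a i = e b i) → dist a b ≤ (Ψ ^ k)⁻¹ := by
    intro a b k hlt
    by_cases hab : a = b
    · rw [hab, dist_self]; positivity
    · have hne : e a ≠ e b := fun h => hab (e.injective h)
      set j := Nat.find (Function.ne_iff.mp hne) with hj
      have hspec : e a j ≠ e b j := Nat.find_spec (Function.ne_iff.mp hne)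
      have hmin : ∀ i, i < j → e a i = e b i := fun i hi =>
        not_not.mp (Nat.find_min (Function.ne_iff.mp hne) hi)
      have hkj : k ≤ j := by
        by_contra h
        exact hspec (hlt j (lt_of_not_ge h))
      have hd : dist a b = dist (e a j) (e b j) / Ψ ^ j := hkey a b j hmin hspec
      have h1 : dist (e a j) (e b j) ≤ 1 := by
        rw [← hdiam]
        exact Metric.dist_le_diam_of_mem (Set.finite_univ.isBounded) (Set.mem_univ _)
          (Set.mem_univ _)
      rw [hd]
      calc dist (e a j) (e b j) / Ψ ^ j ≤ 1 / Ψ ^ j := by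
            apply div_le_div_of_nonneg_right h1 (by positivity) |>.trans_eq rfl
        _ = (Ψ ^ j)⁻¹ := one_div _
        _ ≤ (Ψ ^ k)⁻¹ := by
            apply inv_anti₀ (by positivity)
            exact pow_le_pow_right₀ hΨ1.le hkj
  -- the sets of admissible next coordinates
  set S : (k : ℕ) → (Fin k → X) → Finset X := fun k p =>
    Finset.univ.filter (fun c : X =>
      ∃ z : Y, z ∈ Z ∧ (∀ i : Fin k, e z i = p i) ∧ e z k = c) with hS
  -- Step A: at most m admissible next coordinates
  have claimA : ∀ (k : ℕ) (p : Fin k → X), (S k p).card ≤ m := by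
    intro k p
    have hw : ∀ c : ↥((S k p : Set X)), ∃ z : ↥Z,
        (∀ i : Fin k, e (z : Y) i = p i) ∧ e (z : Y) k = (c : X) := by
      rintro ⟨c, hc⟩
      rw [Finset.mem_coe, hS] at hc
      simp only [Finset.mem_filter, Finset.mem_univ, true_and] at hc
      obtain ⟨z, hz, h1, h2⟩ := hc
      exact ⟨⟨z, hz⟩, h1, h2⟩
    choose w hw1 hw2 using hw
    have hinj : Function.Injective w := by
      intro c c' h
      apply Subtype.ext
      rw [← hw2 c, ← hw2 c', h]
    have hws : ∀ s s' : ↥((S k p : Set X)),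
        dist (s : X) (s' : X) = Ψ ^ k * dist ((w s : ↥Z) : Y) ((w s' : ↥Z) : Y) := by
      intro s s'
      by_cases hss : s = s'
      · subst hss; simp
      · have hcc : e ((w s : ↥Z) : Y) k ≠ e ((w s' : ↥Z) : Y) k := by
          rw [hw2 s, hw2 s']
          exact fun h => hss (Subtype.ext h)
        have hagree : ∀ i, i < k → e ((w s : ↥Z) : Y) i = e ((w s' : ↥Z) : Y) i := by
          intro i hi
          have h1 : e ((w s : ↥Z) : Y) i = p ⟨i, hi⟩ := hw1 s ⟨i, hi⟩
          have h2 : e ((w s' : ↥Z) : Y) i = p ⟨i, hi⟩ := hw1 s' ⟨i, hi⟩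
          rw [h1, h2]
        have hd := hkey _ _ k hagree hcc
        rw [hw2 s, hw2 s'] at hd
        rw [hd]
        field_simp
    have PT := hP_her ↥Z (fun a b => dist (a : Y) (b : Y)) (Set.range w) hZ
    have PT2 := hP_dil _ _ (Ψ ^ k) (by positivity) PT
    have hfe : ∀ a : ↥(Set.range w), (a : ↥Z) = w ((Equiv.ofInjective w hinj).symm a) :=
      fun a => (Equiv.apply_ofInjective_symm hinj a).symm
    have PS := hP_iso ↥(Set.range w) ↥((S k p : Set X)) _
      (fun a b => dist (a : X) (b : X)) (Equiv.ofInjective w hinj).symm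
      (fun a b => by
        have h := hws ((Equiv.ofInjective w hinj).symm a) ((Equiv.ofInjective w hinj).symm b)
        rw [← hfe a, ← hfe b] at h
        exact h) PT2
    have := hmax ((S k p : Set X)) PS
    rwa [Set.ncard_coe_finset] at this
  -- admissible prefixes
  set A : (k : ℕ) → Finset (Fin k → X) := fun k =>
    Finset.univ.filter (fun p => ∃ z : Y, z ∈ Z ∧ ∀ i : Fin k, e z i = p i) with hA
  -- Step B: at most m^k admissible prefixes
  have claimB : ∀ k : ℕ, (A k).card ≤ m ^ k := by
    intro k
    induction k with
    | zero =>
      calc (A 0).card ≤ (Finset.univ : Finset (Fin 0 → X)).card :=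
            Finset.card_le_card (Finset.filter_subset _ _)
        _ ≤ 1 := by
            rw [Finset.card_univ]
            simp
        _ = m ^ 0 := (pow_zero m).symm
    | succ k ih =>
      set φ : (Fin (k + 1) → X) → (Fin k → X) × X :=
        fun q => (fun i => q i.castSucc, q (Fin.last k)) with hφ
      have hφinj : Function.Injective φ := by
        intro q q' h
        funext i
        refine Fin.lastCases ?_ ?_ i
        · exact congrArg Prod.snd h
        · intro j
          exact congrFun (congrArg Prod.fst h) j
      have hsub : (A (k + 1)).image φ ⊆
          (A k).biUnion (fun p => (S k p).image (fun c => (p, c))) := by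
        intro pr hpr
        rw [Finset.mem_image] at hpr
        obtain ⟨q, hq, rfl⟩ := hpr
        rw [hA] at hq
        simp only [Finset.mem_filter, Finset.mem_univ, true_and] at hq
        obtain ⟨z, hz, hq1⟩ := hq
        rw [Finset.mem_biUnion]
        refine ⟨fun i => q i.castSucc, ?_, ?_⟩
        · rw [hA]
          simp only [Finset.mem_filter, Finset.mem_univ, true_and]
          exact ⟨z, hz, fun i => by simpa using hq1 i.castSucc⟩
        · rw [Finset.mem_image]
          refine ⟨q (Fin.last k), ?_, rfl⟩
          rw [hS]
          simp only [Finset.mem_filter, Finset.mem_univ, true_and]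
          exact ⟨z, hz, fun i => by simpa using hq1 i.castSucc,
            by simpa using hq1 (Fin.last k)⟩
      calc (A (k + 1)).card = ((A (k + 1)).image φ).card :=
            (Finset.card_image_of_injective _ hφinj).symm
        _ ≤ ((A k).biUnion (fun p => (S k p).image (fun c => (p, c)))).card :=
            Finset.card_le_card hsub
        _ ≤ ∑ p ∈ A k, ((S k p).image (fun c => (p, c))).card := Finset.card_biUnion_le
        _ ≤ ∑ p ∈ A k, m := Finset.sum_le_sum
            (fun p _ => Finset.card_image_le.trans (claimA k p))
        _ = (A k).card * m := by rw [Finset.sum_const, smul_eq_mul]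
        _ ≤ m ^ k * m := Nat.mul_le_mul_right m ih
        _ = m ^ (k + 1) := (pow_succ m k).symm
  -- Step C: the measure bound
  apply dimH_le
  intro d hd
  by_contra hlt
  rw [not_le] at hlt
  have htgt : 0 ≤ Real.log m / Real.log Ψ :=
    div_nonneg (Real.log_natCast_nonneg m) hlogΨ.le
  have hsd : Real.log m / Real.log Ψ < (d : ℝ) := by
    rwa [← ENNReal.ofReal_coe_nnreal, ENNReal.ofReal_lt_ofReal_iff_of_nonneg htgt] at hlt
  have hd0 : (0 : ℝ) < d := lt_of_le_of_lt htgt hsd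
  -- the ratio c = m / Ψ^d < 1
  set c : ℝ := (m : ℝ) / Ψ ^ (d : ℝ) with hc
  have hΨd : (0 : ℝ) < Ψ ^ (d : ℝ) := Real.rpow_pos_of_pos hΨ0 _
  have hm0 : (0 : ℝ) < m := by exact_mod_cast hm1
  have hc1 : c < 1 := by
    rw [hc, div_lt_one hΨd]
    have : Real.log m < (d : ℝ) * Real.log Ψ := by
      rwa [div_lt_iff₀ hlogΨ] at hsd
    calc (m : ℝ) = Real.exp (Real.log m) := (Real.exp_log hm0).symm
      _ < Real.exp ((d : ℝ) * Real.log Ψ) := Real.exp_lt_exp.mpr this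
      _ = Ψ ^ (d : ℝ) := by rw [mul_comm, Real.exp_mul, Real.exp_log hΨ0]
  have hc0 : 0 ≤ c := by positivity
  -- the covering sets
  have hzero : μH[(d : ℝ)] Z = 0 := by
    set t : (k : ℕ) → (Fin k → X) → Set Y :=
      fun k p => {y : Y | y ∈ Z ∧ ∀ i : Fin k, e y i = p i} with ht
    have hcover : ∀ k : ℕ, Z ⊆ ⋃ p : Fin k → X, t k p := by
      intro k z hz
      exact Set.mem_iUnion.mpr ⟨fun i => e z i, hz, fun i => rfl⟩
    have hdiam' : ∀ (k : ℕ) (p : Fin k → X),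
        EMetric.diam (t k p) ≤ ENNReal.ofReal ((Ψ ^ k)⁻¹) := by
      intro k p
      apply EMetric.diam_le
      intro x hx y hy
      rw [edist_dist]
      apply ENNReal.ofReal_le_ofReal
      apply hub x y k
      intro i hi
      rw [show e x i = p ⟨i, hi⟩ from hx.2 ⟨i, hi⟩, show e y i = p ⟨i, hi⟩ from hy.2 ⟨i, hi⟩]
    have hr0 : Filter.Tendsto (fun k : ℕ => ENNReal.ofReal ((Ψ ^ k)⁻¹)) Filter.atTop (nhds 0) := by
      have h1 : Filter.Tendsto (fun k : ℕ => Ψ⁻¹ ^ k) Filter.atTop (nhds 0) :=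
        tendsto_pow_atTop_nhds_zero_of_lt_one (by positivity)
          (by rw [inv_lt_one_iff₀]; right; exact hΨ1)
      have h2 := (ENNReal.continuous_ofReal.tendsto 0).comp h1
      simpa [Function.comp_def, inv_pow] using h2
    have hmain := Measure.hausdorffMeasure_le_liminf_sum (d : ℝ) Z
      (fun k => ENNReal.ofReal ((Ψ ^ k)⁻¹)) hr0 t
      (Filter.Eventually.of_forall (fun k p => hdiam' k p))
      (Filter.Eventually.of_forall hcover)
    have hsum : ∀ k : ℕ,
        ∑ p : Fin k → X, EMetric.diam (t k p) ^ (d : ℝ) ≤ ENNReal.ofReal c ^ k := by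
      intro k
      have hzero' : ∀ p ∈ (Finset.univ : Finset (Fin k → X)), p ∉ A k →
          EMetric.diam (t k p) ^ (d : ℝ) = 0 := by
        intro p _ hp
        have hemp : t k p = ∅ := by
          rw [Set.eq_empty_iff_forall_notMem]
          intro y hy
          apply hp
          rw [hA]
          simp only [Finset.mem_filter, Finset.mem_univ, true_and]
          exact ⟨y, hy.1, hy.2⟩
        rw [hemp, EMetric.diam, EMetric.diam_empty, ENNReal.zero_rpow_of_pos hd0]
      have e1 : ((Ψ ^ k)⁻¹ : ℝ) ^ (d : ℝ) = ((Ψ ^ (d : ℝ))⁻¹) ^ k := by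
        rw [← Real.rpow_natCast Ψ k, ← Real.rpow_neg hΨ0.le, ← Real.rpow_natCast (Ψ ^ (d : ℝ))⁻¹ k,
          ← Real.rpow_neg hΨ0.le, ← Real.rpow_mul hΨ0.le, ← Real.rpow_mul hΨ0.le]
        ring_nf
      rw [← Finset.sum_subset (Finset.subset_univ (A k)) hzero']
      calc ∑ p ∈ A k, EMetric.diam (t k p) ^ (d : ℝ)
          ≤ ∑ p ∈ A k, ENNReal.ofReal (((Ψ ^ k)⁻¹) ^ (d : ℝ)) := by
            apply Finset.sum_le_sum
            intro p _
            calc EMetric.diam (t k p) ^ (d : ℝ)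
                ≤ ENNReal.ofReal ((Ψ ^ k)⁻¹) ^ (d : ℝ) :=
                  ENNReal.rpow_le_rpow (hdiam' k p) hd0.le
              _ = ENNReal.ofReal (((Ψ ^ k)⁻¹) ^ (d : ℝ)) :=
                  ENNReal.ofReal_rpow_of_nonneg (by positivity) hd0.le
        _ = ((A k).card : ℝ≥0∞) * ENNReal.ofReal (((Ψ ^ k)⁻¹) ^ (d : ℝ)) := by
            rw [Finset.sum_const, nsmul_eq_mul]
        _ ≤ ((m ^ k : ℕ) : ℝ≥0∞) * ENNReal.ofReal (((Ψ ^ k)⁻¹) ^ (d : ℝ)) :=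
            mul_le_mul_left (by exact_mod_cast Nat.cast_le.mpr (claimB k)) _
        _ = ENNReal.ofReal c ^ k := by
            rw [← ENNReal.ofReal_natCast (m ^ k), ← ENNReal.ofReal_mul (by positivity),
              ← ENNReal.ofReal_pow hc0]
            congr 1
            rw [e1, hc, div_eq_mul_inv, mul_pow]
            push_cast
            ring
    have htend : Filter.Tendsto (fun k : ℕ => ENNReal.ofReal c ^ k) Filter.atTop (nhds 0) :=
      ENNReal.tendsto_pow_atTop_nhds_zero_of_lt_one
        (by rw [← ENNReal.ofReal_one]; exact ENNReal.ofReal_lt_ofReal_iff_of_nonneg hc0 |>.mpr hc1)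
    have hlim : Filter.liminf
        (fun k : ℕ => ∑ p : Fin k → X, EMetric.diam (t k p) ^ (d : ℝ)) Filter.atTop ≤ 0 := by
      calc Filter.liminf (fun k : ℕ => ∑ p : Fin k → X, EMetric.diam (t k p) ^ (d : ℝ))
            Filter.atTop
          ≤ Filter.liminf (fun k : ℕ => ENNReal.ofReal c ^ k) Filter.atTop :=
            Filter.liminf_le_liminf (Filter.Eventually.of_forall hsum)
        _ = 0 := htend.liminf_eq
    exact le_antisymm (hmain.trans hlim) zero_le
  rw [hd] at hzero
  exact ENNReal.top_ne_zero hzero
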